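/- Fix λ₀ ∈ ℂ∖{0,1,−1} and set t₀ = λ₀ + λ₀⁻¹. For every λ ∈ ℂ∖{0}, letting t = λ + λ⁻¹, the set of solutions t' ∈ ℂ of the equation (t−t')²/(t₀²−4) − t t'/(t₀+2) = −1 is exactly {λ₀λ + λ₀⁻¹λ⁻¹, λ₀λ⁻¹ + λ₀⁻¹λ}. -/
import Mathlib


theorem stmt10 (lam0 : ℂ) (h0 : lam0 ≠ 0) (h1 : lam0 ≠ 1) (hm1 : lam0 ≠ -1)
    (t0 : ℂ) (ht0 : t0 = lam0 + lam0⁻¹) :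
    ∀ lam : ℂ, lam ≠ 0 →
      {t' : ℂ | ((lam + lam⁻¹) - t') ^ 2 / (t0 ^ 2 - 4)
          - (lam + lam⁻¹) * t' / (t0 + 2) = -1}
        = {lam0 * lam + lam0⁻¹ * lam⁻¹, lam0 * lam⁻¹ + lam0⁻¹ * lam} := by
  intro lam hlam
  have hp : lam0 + 1 ≠ 0 := fun h => hm1 (eq_neg_of_add_eq_zero_left h)
  have hm : lam0 - 1 ≠ 0 := sub_ne_zero.mpr h1
  have hinv0 : lam0 * lam0⁻¹ = 1 := mul_inv_cancel₀ h0
  have hinv : lam * lam⁻¹ = 1 := mul_inv_cancel₀ hlam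
  have h2 : t0 + 2 ≠ 0 := by
    rw [ht0]
    intro h
    apply mul_ne_zero (mul_ne_zero hp hp) h0
    linear_combination lam0^2 * h - lam0 * hinv0
  have hm2 : t0 - 2 ≠ 0 := by
    rw [ht0]
    intro h
    apply mul_ne_zero (mul_ne_zero hm hm) h0
    linear_combination lam0^2 * h - lam0 * hinv0
  have hD : t0 ^ 2 - 4 ≠ 0 := by
    have : t0 ^ 2 - 4 = (t0 - 2) * (t0 + 2) := by ring
    rw [this]; exact mul_ne_zero hm2 h2
  ext t'
  simp only [Set.mem_setOf_eq, Set.mem_insert_iff, Set.mem_singleton_iff]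
  set r1 := lam0 * lam + lam0⁻¹ * lam⁻¹ with hr1
  set r2 := lam0 * lam⁻¹ + lam0⁻¹ * lam with hr2
  rw [div_sub_div _ _ hD h2, div_eq_iff (mul_ne_zero hD h2)]
  have key : ((lam + lam⁻¹) - t') ^ 2 * (t0 + 2) - (t0 ^ 2 - 4) * ((lam + lam⁻¹) * t')
      - (-1 * ((t0 ^ 2 - 4) * (t0 + 2))) = (t0 + 2) * ((t' - r1) * (t' - r2)) := by
    subst ht0
    rw [hr1, hr2]
    linear_combination
      ((4:ℂ) + (-2:ℂ)*lam⁻¹^2 + (-2:ℂ)*lam^2 + (3:ℂ)*lam0⁻¹ + (-1:ℂ)*lam0⁻¹*lam⁻¹^2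
        + (-1:ℂ)*lam0⁻¹*lam*lam⁻¹ + (-1:ℂ)*lam0⁻¹*lam^2 + (3:ℂ)*lam0 + (-1:ℂ)*lam0*lam⁻¹^2
        + (-1:ℂ)*lam0*lam*lam⁻¹ + (-1:ℂ)*lam0*lam^2) * hinv0
      + ((4:ℂ) + lam0⁻¹ + (-2:ℂ)*lam0⁻¹^2 + (-1:ℂ)*lam0⁻¹^3 + lam0 + (-2:ℂ)*lam0^2
        + (-1:ℂ)*lam0^3) * hinv
  constructor
  · intro h
    have hq : (t' - r1) * (t' - r2) = 0 := by
      apply mul_left_cancel₀ h2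
      rw [mul_zero, ← key]
      linear_combination h
    rcases mul_eq_zero.mp hq with h' | h'
    · exact Or.inl (sub_eq_zero.mp h')
    · exact Or.inr (sub_eq_zero.mp h')
  · intro h
    have hq : (t' - r1) * (t' - r2) = 0 := by
      rcases h with h | h <;> rw [h] <;> ring
    linear_combination key + (t0 + 2) * hq
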